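/- If x₀, x₁, x₂ are complex roots of a trinomial t^m + A t^n + B (with complex coefficients, m > n > 0) satisfying |x₀| ≥ |x₁| ≥ |x₂|, then |1 − (x₂/x₁)^n| ≤ 2|x₁/x₀|^{m−n} + 2|x₁/x₀|^m, provided x₁ ≠ 0 and x₀ ≠ 0. -/

import Mathlib

/-- If `x₀, x₁, x₂` are complex roots of `t^m + A t^n + B` with `|x₀| ≥ |x₁| ≥ |x₂|`,
`x₀ ≠ 0`, `x₁ ≠ 0`, then `|1 − (x₂/x₁)^n| ≤ 2|x₁/x₀|^{m−n} + 2|x₁/x₀|^m`. -/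
theorem trinomial_roots_complex_estimate (m n : ℕ) (A B : ℂ)
    (hmn : n < m) (hn : 0 < n)
    (x₀ x₁ x₂ : ℂ)
    (h₀ : x₀ ^ m + A * x₀ ^ n + B = 0)
    (h₁ : x₁ ^ m + A * x₁ ^ n + B = 0)
    (h₂ : x₂ ^ m + A * x₂ ^ n + B = 0)
    (hle₁ : ‖x₁‖ ≤ ‖x₀‖)
    (hle₂ : ‖x₂‖ ≤ ‖x₁‖)
    (hx₀ : x₀ ≠ 0) (hx₁ : x₁ ≠ 0) :
    ‖1 - (x₂ / x₁) ^ n‖ ≤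
      2 * ‖x₁ / x₀‖ ^ (m - n) + 2 * ‖x₁ / x₀‖ ^ m := by
  obtain ⟨k, rfl⟩ : ∃ k, m = k + n := ⟨m - n, (Nat.sub_add_cancel hmn.le).symm⟩
  have hkn : k + n - n = k := by omega
  rw [hkn]
  have hdet : x₀^(k+n)*(x₁^n - x₂^n) - x₀^n*(x₁^(k+n) - x₂^(k+n))
      + (x₁^(k+n)*x₂^n - x₂^(k+n)*x₁^n) = 0 := by
    linear_combination (x₁^n - x₂^n)*h₀ + (x₂^n - x₀^n)*h₁ + (x₀^n - x₁^n)*h₂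
  have key : 1 - (x₂/x₁)^n
      = (x₁^(k+n) - x₂^(k+n))/(x₀^k * x₁^n)
        - (x₁^(k+n)*x₂^n - x₂^(k+n)*x₁^n)/(x₀^(k+n) * x₁^n) := by
    have h0 : (x₀ : ℂ) ^ k ≠ 0 := pow_ne_zero _ hx₀
    have h1 : (x₁ : ℂ) ^ n ≠ 0 := pow_ne_zero _ hx₁
    rw [div_pow]
    field_simp
    linear_combination x₀^k * hdet
  rw [key]
  set r0 := ‖x₀‖ with hr0def
  set r1 := ‖x₁‖ with hr1def
  have hr0 : 0 < r0 := norm_pos_iff.mpr hx₀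
  have hr1 : 0 < r1 := norm_pos_iff.mpr hx₁
  have hle₁' : r1 ≤ r0 := hle₁
  have hle₂' : ‖x₂‖ ≤ r1 := hle₂
  have hx2 : (0:ℝ) ≤ ‖x₂‖ := norm_nonneg _
  have e1 : ‖(x₁^(k+n) - x₂^(k+n))/(x₀^k * x₁^n)‖ ≤ 2 * (r1/r0)^k := by
    rw [norm_div, norm_mul, norm_pow, norm_pow, div_le_iff₀ (by positivity)]
    have heq : 2 * (r1/r0)^k * (r0^k * r1^n) = 2 * r1^(k+n) := by
      rw [div_pow, pow_add]; field_simp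
    rw [heq]
    calc ‖x₁^(k+n) - x₂^(k+n)‖ ≤ ‖x₁^(k+n)‖ + ‖x₂^(k+n)‖ := norm_sub_le _ _
      _ = r1^(k+n) + ‖x₂‖^(k+n) := by rw [norm_pow, norm_pow]
      _ ≤ r1^(k+n) + r1^(k+n) := by gcongr
      _ = 2 * r1^(k+n) := by ring
  have e2 : ‖(x₁^(k+n)*x₂^n - x₂^(k+n)*x₁^n)/(x₀^(k+n) * x₁^n)‖ ≤ 2 * (r1/r0)^(k+n) := by
    rw [norm_div, norm_mul, norm_pow, norm_pow, div_le_iff₀ (by positivity)]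
    have heq : 2 * (r1/r0)^(k+n) * (r0^(k+n) * r1^n) = 2 * (r1^(k+n) * r1^n) := by
      rw [div_pow]; field_simp
    rw [heq]
    calc ‖x₁^(k+n)*x₂^n - x₂^(k+n)*x₁^n‖
        ≤ ‖x₁^(k+n)*x₂^n‖ + ‖x₂^(k+n)*x₁^n‖ := norm_sub_le _ _
      _ = r1^(k+n) * ‖x₂‖^n + ‖x₂‖^(k+n) * r1^n := by
          simp only [norm_mul, norm_pow]; rfl
      _ ≤ r1^(k+n) * r1^n + r1^(k+n) * r1^n := by gcongr
      _ = 2 * (r1^(k+n) * r1^n) := by ring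
  calc ‖_ - _‖ ≤ _ := norm_sub_le _ _
    _ ≤ 2 * (r1/r0)^k + 2 * (r1/r0)^(k+n) := add_le_add e1 e2
    _ = 2 * ‖x₁/x₀‖^k + 2 * ‖x₁/x₀‖^(k+n) := by rw [norm_div]
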